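/- arXiv:1701.04118 — 2 statements merged into one kernel-verified Lean document; each statement's English description precedes it below -/
import Mathlib

section
/- Let A₁,…,Aₘ ∈ 𝕊ⁿ. The set {X ∈ 𝕊₊ⁿ : Tr(Aᵢ X) = 0 for all i = 1,…,m} equals {0} if and only if the linear span of A₁,…,Aₘ contains a positive definite matrix. -/
open Matrix

private def QPos (n : ℕ) : Set (Matrix (Fin n) (Fin n) ℝ) :=
  {M | ∀ x : Fin n → ℝ, x ≠ 0 → 0 < x ⬝ᵥ M *ᵥ x}

private lemma qpos_convex (n : ℕ) : Convex ℝ (QPos n) := by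
  intro M hM N hN a b ha hb hab
  intro x hx
  have hq : x ⬝ᵥ (a • M + b • N) *ᵥ x = a * (x ⬝ᵥ M *ᵥ x) + b * (x ⬝ᵥ N *ᵥ x) := by
    simp [add_mulVec, smul_mulVec, dotProduct_add, dotProduct_smul, smul_eq_mul]
  rw [hq]
  rcases ha.eq_or_lt with h | h
  · have hb1 : b = 1 := by linarith
    simp [← h, hb1]
    exact hN x hx
  · exact add_pos_of_pos_of_nonneg (mul_pos h (hM x hx))
      (mul_nonneg hb (le_of_lt (hN x hx)))

private lemma qpos_isOpen (n : ℕ) : IsOpen (QPos n) := by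
  rw [isOpen_iff_mem_nhds]
  intro M hM
  have hcont : Continuous fun p : Matrix (Fin n) (Fin n) ℝ × (Fin n → ℝ) =>
      p.2 ⬝ᵥ p.1 *ᵥ p.2 :=
    continuous_snd.dotProduct (continuous_fst.matrix_mulVec continuous_snd)
  have hK : IsCompact (Metric.sphere (0 : Fin n → ℝ) 1) := isCompact_sphere 0 1
  have hev : ∀ᶠ N in nhds M, ∀ y ∈ Metric.sphere (0 : Fin n → ℝ) 1, 0 < y ⬝ᵥ N *ᵥ y := by
    apply hK.eventually_forall_of_forall_eventually
    intro y hy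
    have : 0 < y ⬝ᵥ M *ᵥ y := by
      apply hM
      intro h0
      simp [h0] at hy
    exact (hcont.tendsto (M, y)).eventually (eventually_gt_nhds this)
  refine Filter.mem_of_superset hev ?_
  intro N hN x hx
  have hnx : ‖x‖ ≠ 0 := norm_ne_zero_iff.mpr hx
  set y : Fin n → ℝ := ‖x‖⁻¹ • x with hy
  have hys : y ∈ Metric.sphere (0 : Fin n → ℝ) 1 := by
    rw [mem_sphere_zero_iff_norm, hy, norm_smul]
    simp [hnx]
  have hpos := hN y hys
  have hxy : x = ‖x‖ • y := by
    rw [hy, smul_smul, mul_inv_cancel₀ hnx, one_smul]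
  rw [hxy]
  have : (‖x‖ • y) ⬝ᵥ N *ᵥ (‖x‖ • y) = ‖x‖ * ‖x‖ * (y ⬝ᵥ N *ᵥ y) := by
    simp [smul_dotProduct, mulVec_smul, dotProduct_smul, smul_eq_mul]
    ring
  rw [this]
  positivity

/-- (Bohnenblust) Let `A₁, …, Aₘ ∈ 𝕊ⁿ`. The set
`{X ∈ 𝕊₊ⁿ : Tr(Aᵢ X) = 0, i = 1, …, m}` equals `{0}` if and only if the linear span of
`A₁, …, Aₘ` contains a positive definite matrix. -/
theorem psd_kernel_trivial_iff_posdef_in_span (n m : ℕ)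
    (A : Fin m → Matrix (Fin n) (Fin n) ℝ) (hA : ∀ i, (A i).IsSymm) :
    {X : Matrix (Fin n) (Fin n) ℝ | X.PosSemidef ∧ ∀ i, (A i * X).trace = 0} = {0} ↔
      ∃ t : Fin m → ℝ, (∑ i, t i • A i).PosDef := by
  constructor
  · intro hset
    by_cases hn : n = 0
    · subst hn
      refine ⟨0, ?_, ?_⟩
      · exact Subsingleton.elim _ _
      · intro x hx
        exact absurd (Subsingleton.elim x 0) hx
    · by_contra hne
      push_neg at hne
      set V : Submodule ℝ (Matrix (Fin n) (Fin n) ℝ) := Submodule.span ℝ (Set.range A) with hV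
      have hVsymm : ∀ M ∈ V, Matrix.IsSymm M := by
        intro M hM
        induction hM using Submodule.span_induction with
        | mem x hx => obtain ⟨i, rfl⟩ := hx; exact hA i
        | zero => exact Matrix.isSymm_zero
        | add x y _ _ hx hy => exact hx.add hy
        | smul c x _ hx => exact hx.smul c
      have hdisj : Disjoint (QPos n) (V : Set (Matrix (Fin n) (Fin n) ℝ)) := by
        rw [Set.disjoint_left]
        intro M hMq hMV
        obtain ⟨t, ht⟩ := (Submodule.mem_span_range_iff_exists_fun (R := ℝ)).mp hMV
        refine hne t ?_
        rw [ht]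
        rw [posDef_iff_dotProduct_mulVec]
        constructor
        · rw [Matrix.IsHermitian, conjTranspose_eq_transpose_of_trivial]
          exact hVsymm M hMV
        · intro x hx
          simpa using hMq x hx
      obtain ⟨f, u, hfs, hft⟩ :=
        geometric_hahn_banach_open (qpos_convex n) (qpos_isOpen n) V.convex hdisj
      have hf0 : ∀ M ∈ V, f M = 0 := by
        intro M hM
        by_contra h
        have h1 : u ≤ f (((u - 1) / f M) • M) := hft _ (V.smul_mem _ hM)
        rw [ContinuousLinearMap.map_smul, smul_eq_mul, div_mul_cancel₀ _ h] at h1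
        linarith
      have hu0 : u ≤ 0 := by
        have := hft 0 V.zero_mem
        simpa using this
      have hneg : ∀ M ∈ QPos n, f M < 0 := fun M hM => lt_of_lt_of_le (hfs M hM) hu0
      have h1q : (1 : Matrix (Fin n) (Fin n) ℝ) ∈ QPos n := by
        intro x hx
        simp only [one_mulVec]
        have := dotProduct_star_self_pos_iff (v := x)
        simpa using this.mpr hx
      have hf1 : f 1 < 0 := hneg 1 h1q
      have hPSD : ∀ P : Matrix (Fin n) (Fin n) ℝ, P.PosSemidef → f P ≤ 0 := by
        intro P hP
        by_contra h
        push_neg at h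
        set ε : ℝ := f P / (2 * (-f 1)) with hε
        have hεpos : 0 < ε := by
          apply div_pos h; linarith
        have hmem : P + ε • 1 ∈ QPos n := by
          intro x hx
          have h1 : 0 < x ⬝ᵥ (1 : Matrix (Fin n) (Fin n) ℝ) *ᵥ x := h1q x hx
          have h2 : 0 ≤ x ⬝ᵥ P *ᵥ x := by simpa using hP.dotProduct_mulVec_nonneg x
          have : x ⬝ᵥ (P + ε • 1) *ᵥ x = x ⬝ᵥ P *ᵥ x + ε * (x ⬝ᵥ (1 : Matrix (Fin n) (Fin n) ℝ) *ᵥ x) := by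
            simp [add_mulVec, smul_mulVec, dotProduct_add, dotProduct_smul, smul_eq_mul]
          rw [this]
          positivity
        have hlt := hneg _ hmem
        rw [map_add, ContinuousLinearMap.map_smul, smul_eq_mul] at hlt
        have hne1 : (-f 1) ≠ 0 := ne_of_gt (by linarith)
        have : ε * (-f 1) = f P / 2 := by
          rw [hε, show (2 : ℝ) * -f 1 = 2 * -f 1 from rfl, ← div_div, div_mul_cancel₀ _ hne1]
        nlinarith
      -- the dual matrix
      set X : Matrix (Fin n) (Fin n) ℝ := Matrix.of fun i j =>
        -(f (single i j 1) + f (single j i 1)) / 2 with hX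
      have hfM : ∀ M : Matrix (Fin n) (Fin n) ℝ, f M = ∑ i, ∑ j, M i j * f (single i j 1) := by
        intro M
        conv_lhs => rw [matrix_eq_sum_single M]
        rw [map_sum]
        refine Finset.sum_congr rfl fun i _ => ?_
        rw [map_sum]
        refine Finset.sum_congr rfl fun j _ => ?_
        have : single i j (M i j) = M i j • single i j 1 := by
          rw [smul_single, smul_eq_mul, mul_one]
        rw [this, ContinuousLinearMap.map_smul, smul_eq_mul]
      have hXsymm : X.IsSymm := by
        ext i j
        simp only [hX, Matrix.transpose_apply, Matrix.of_apply]
        ring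
      have htr : ∀ M : Matrix (Fin n) (Fin n) ℝ, M.IsSymm → (M * X).trace = -f M := by
        intro M hMs
        have hsym : ∀ i j, M j i = M i j := by
          intro i j
          conv_rhs => rw [← hMs]
          rfl
        have h2 : ∑ i, ∑ j, M i j * f (single j i 1) = f M := by
          rw [Finset.sum_comm, hfM M]
          refine Finset.sum_congr rfl fun i _ => Finset.sum_congr rfl fun j _ => ?_
          rw [hsym i j]
        have h1 : (M * X).trace = ∑ i, ∑ j, M i j * X j i := by
          simp [Matrix.trace, Matrix.diag, Matrix.mul_apply]
        rw [h1]
        have h3 : ∀ i j, M i j * X j i =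
            -(1/2) * (M i j * f (single j i 1))
              + -(1/2) * (M i j * f (single i j 1)) := by
          intro i j
          simp only [hX, Matrix.of_apply]
          ring
        calc ∑ i, ∑ j, M i j * X j i
            = ∑ i, ∑ j, (-(1/2) * (M i j * f (single j i 1))
              + -(1/2) * (M i j * f (single i j 1))) := by
              exact Finset.sum_congr rfl fun i _ => Finset.sum_congr rfl fun j _ => h3 i j
          _ = -(1/2) * (∑ i, ∑ j, M i j * f (single j i 1))
              + -(1/2) * (∑ i, ∑ j, M i j * f (single i j 1)) := by
              simp [Finset.sum_add_distrib, Finset.mul_sum]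
          _ = -f M := by rw [h2, ← hfM M]; ring
      have hquad : ∀ x : Fin n → ℝ, x ⬝ᵥ X *ᵥ x = ((vecMulVec x x) * X).trace := by
        intro x
        simp only [Matrix.trace, Matrix.diag, Matrix.mul_apply, vecMulVec_apply,
          dotProduct, mulVec]
        rw [Finset.sum_comm]
        refine Finset.sum_congr rfl fun i _ => ?_
        rw [Finset.mul_sum]
        refine Finset.sum_congr rfl fun j _ => ?_
        ring
      have hvsymm : ∀ x : Fin n → ℝ, (vecMulVec x x).IsSymm := by
        intro x
        ext i j
        simp [vecMulVec_apply, mul_comm]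
      have hvpsd : ∀ x : Fin n → ℝ, (vecMulVec x x).PosSemidef := by
        intro x
        rw [posSemidef_iff_dotProduct_mulVec]
        constructor
        · rw [Matrix.IsHermitian, conjTranspose_eq_transpose_of_trivial]
          exact hvsymm x
        · intro y
          have : star y ⬝ᵥ (vecMulVec x x) *ᵥ y = (x ⬝ᵥ y) * (x ⬝ᵥ y) := by
            simp only [star_trivial, vecMulVec_apply, dotProduct, mulVec, Finset.mul_sum,
              Finset.sum_mul]
            rw [Finset.sum_comm]
            refine Finset.sum_congr rfl fun i _ => Finset.sum_congr rfl fun j _ => ?_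
            ring
          rw [this]
          exact mul_self_nonneg _
      have hXpsd : X.PosSemidef := by
        rw [posSemidef_iff_dotProduct_mulVec]
        constructor
        · rw [Matrix.IsHermitian, conjTranspose_eq_transpose_of_trivial]
          exact hXsymm
        · intro y
          rw [star_trivial, hquad y, htr _ (hvsymm y)]
          have := hPSD _ (hvpsd y)
          linarith
      have hXmem : X ∈ {X : Matrix (Fin n) (Fin n) ℝ | X.PosSemidef ∧ ∀ i, (A i * X).trace = 0} := by
        refine ⟨hXpsd, fun i => ?_⟩
        rw [htr (A i) (hA i), hf0 (A i) (Submodule.subset_span ⟨i, rfl⟩)]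
        ring
      have hX0 : X = 0 := by
        rw [hset] at hXmem
        exact hXmem
      have : ((1 : Matrix (Fin n) (Fin n) ℝ) * X).trace = -f 1 := htr 1 Matrix.isSymm_one
      rw [hX0] at this
      simp at this
      linarith
  · rintro ⟨t, ht⟩
    ext X
    simp only [Set.mem_setOf_eq, Set.mem_singleton_iff]
    constructor
    · rintro ⟨hXpsd, hXtr⟩
      -- trace ((∑ t i • A i) * X) = 0
      have htrace : ((∑ i, t i • A i) * X).trace = 0 := by
        rw [Finset.sum_mul]
        rw [Matrix.trace_sum]
        rw [Finset.sum_eq_zero]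
        intro i _
        rw [Matrix.smul_mul, Matrix.trace_smul, hXtr i, smul_zero]
      -- X = Bᴴ * B
      obtain ⟨B, rfl⟩ : ∃ B : Matrix (Fin n) (Fin n) ℝ, X = Bᴴ * B := by
        open scoped MatrixOrder Matrix.Norms.L2Operator in
        obtain ⟨B, rfl⟩ := CStarAlgebra.nonneg_iff_eq_star_mul_self.mp hXpsd.nonneg
        exact ⟨B, rfl⟩
      set P := ∑ i, t i • A i with hP
      have hrow : ∀ i : Fin n, B i = 0 := by
        have hkey : (P * (Bᴴ * B)).trace = ∑ i, (B i) ⬝ᵥ P *ᵥ (B i) := by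
          rw [← Matrix.mul_assoc, Matrix.trace_mul_comm]
          simp only [Matrix.trace, Matrix.diag, Matrix.mul_apply, Matrix.conjTranspose_apply,
            dotProduct, mulVec, star_trivial]
        rw [hkey] at htrace
        have hnneg : ∀ i ∈ Finset.univ, 0 ≤ (B i) ⬝ᵥ P *ᵥ (B i) := by
          intro i _
          have := ht.posSemidef.dotProduct_mulVec_nonneg (B i)
          simpa using this
        have := (Finset.sum_eq_zero_iff_of_nonneg hnneg).mp htrace
        intro i
        by_contra hBi
        have := (posDef_iff_dotProduct_mulVec.mp ht).2 hBi
        rw [star_trivial] at this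
        have h0 := (Finset.sum_eq_zero_iff_of_nonneg hnneg).mp htrace i (Finset.mem_univ i)
        linarith
      have hB : B = 0 := by
        ext i j
        have := congrFun (hrow i) j
        simpa using this
      rw [hB]
      simp
    · rintro rfl
      exact ⟨Matrix.PosSemidef.zero, fun i => by simp⟩
end

section
/- (Schoenberg) Let n ≥ 1, r ≥ 1, let D ∈ 𝕊ⁿ be a symmetric matrix, and let V = Iₙ − (1/n)·𝟏𝟏ᵀ. Then there exist points x₁,…,xₙ ∈ ℝ^r with D_{ij} = ‖xᵢ − xⱼ‖² for all i, j if and only if the following three conditions hold: (i) D_{ii} = 0 for all i = 1,…,n; (ii) −V D V is positive semidefinite; (iii) rank(V D V) ≤ r. -/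
open Matrix

section Aux

lemma psd_smul_nonneg {n : ℕ} {M : Matrix (Fin n) (Fin n) ℝ} (h : M.PosSemidef) {c : ℝ}
    (hc : 0 ≤ c) : (c • M).PosSemidef := by
  constructor
  · unfold Matrix.IsHermitian
    rw [conjTranspose_smul, h.1]
    congr 1
  · intro x
    exact (h.smul hc).2 x

lemma psd_factor {n r : ℕ} (B : Matrix (Fin n) (Fin n) ℝ) (hB : B.PosSemidef)
    (hrk : B.rank ≤ r) : ∃ X : Matrix (Fin r) (Fin n) ℝ, B = Xᵀ * X := by
  classical
  have hH := hB.1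
  have hcard : Fintype.card {i // hH.eigenvalues i ≠ 0} ≤ Fintype.card (Fin r) := by
    rw [Fintype.card_fin]
    exact hH.rank_eq_card_non_zero_eigs ▸ hrk
  obtain ⟨e⟩ := Function.Embedding.nonempty_of_card_le hcard
  set lam := hH.eigenvalues with hlam
  set U : Matrix (Fin n) (Fin n) ℝ := (hH.eigenvectorUnitary : Matrix (Fin n) (Fin n) ℝ) with hU
  have hspec : B = U * diagonal lam * star U := by
    have := hH.spectral_theorem
    rwa [RCLike.ofReal_real_eq_id, Function.id_comp] at this
  set S : Matrix (Fin n) (Fin n) ℝ := diagonal (fun i => Real.sqrt (lam i)) with hS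
  set C : Matrix (Fin n) (Fin n) ℝ := S * star U with hC
  set P : Matrix (Fin r) (Fin n) ℝ :=
    fun k i => if h : lam i ≠ 0 then (if e ⟨i, h⟩ = k then 1 else 0) else 0 with hP
  refine ⟨P * C, ?_⟩
  have hPtP : Pᵀ * P = diagonal (fun i => if lam i ≠ 0 then (1:ℝ) else 0) := by
    ext i j
    simp only [mul_apply, transpose_apply, diagonal_apply]
    simp only [hP]
    by_cases hi : lam i ≠ 0
    · by_cases hj : lam j ≠ 0
      · simp only [dif_pos hi, dif_pos hj]
        by_cases hij : i = j
        · subst hij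
          simp [ite_and, Finset.sum_ite_eq' Finset.univ (e ⟨i, hi⟩) (fun _ => (1:ℝ)), hi]
        · rw [if_neg hij]
          apply Finset.sum_eq_zero
          intro k _
          by_cases h1 : e ⟨i, hi⟩ = k
          · have h2 : e ⟨j, hj⟩ ≠ k := by
              intro h2
              exact hij (congrArg Subtype.val (e.injective (h1.trans h2.symm)))
            simp [h1, h2]
          · simp [h1]
      · have hij : i ≠ j := by rintro rfl; exact hj hi
        simp [dif_neg hj, hij]
    · have : ∀ k : Fin r, (if h : lam i ≠ 0 then (if e ⟨i, h⟩ = k then (1:ℝ) else 0) else 0) = 0 :=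
        fun k => dif_neg hi
      push_neg at hi
      simp [this, hi]
  have hSC : (diagonal (fun i => if lam i ≠ 0 then (1:ℝ) else 0)) * C = C := by
    ext i j
    rw [diagonal_mul]
    by_cases hi : lam i ≠ 0
    · simp [hi]
    · push_neg at hi
      have : C i j = 0 := by
        rw [hC, diagonal_mul, hi, Real.sqrt_zero, zero_mul]
      simp [this]
  have hCtC : Cᵀ * C = B := by
    rw [hC, transpose_mul, hspec]
    have h1 : (star U)ᵀ = U := by
      rw [← conjTranspose_eq_transpose_of_trivial, star_eq_conjTranspose,
        conjTranspose_conjTranspose]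
    have h2 : Sᵀ = S := by rw [hS, diagonal_transpose]
    have h3 : S * S = diagonal lam := by
      rw [hS, diagonal_mul_diagonal]
      exact congrArg diagonal (funext fun i => Real.mul_self_sqrt (hB.eigenvalues_nonneg i))
    rw [h1, h2]
    rw [show U * S * (S * star U) = U * (S * S) * star U by noncomm_ring, h3]
  calc B = Cᵀ * C := hCtC.symm
    _ = Cᵀ * ((Pᵀ * P) * C) := by rw [hPtP, hSC]
    _ = (P * C)ᵀ * (P * C) := by
        rw [transpose_mul P C, Matrix.mul_assoc Cᵀ Pᵀ (P * C), Matrix.mul_assoc Pᵀ P C]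

lemma Vmul_apply {n : ℕ} (M : Matrix (Fin n) (Fin n) ℝ) (i j : Fin n) :
    (((1 - (1 / (n : ℝ)) • vecMulVec (fun _ => (1:ℝ)) (fun _ => 1)) * M
      : Matrix (Fin n) (Fin n) ℝ)) i j
      = M i j - (1 / (n:ℝ)) * ∑ k, M k j := by
  simp only [mul_apply, Matrix.sub_apply, Matrix.smul_apply, vecMulVec_apply, one_apply, smul_eq_mul,
    mul_one, sub_mul, one_mul, Finset.sum_sub_distrib, ite_mul, zero_mul,
    Finset.sum_ite_eq, Finset.mem_univ, if_true, Finset.mul_sum]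

lemma mulV_apply {n : ℕ} (M : Matrix (Fin n) (Fin n) ℝ) (i j : Fin n) :
    ((M * (1 - (1 / (n : ℝ)) • vecMulVec (fun _ => (1:ℝ)) (fun _ => 1))
      : Matrix (Fin n) (Fin n) ℝ)) i j
      = M i j - (1 / (n:ℝ)) * ∑ k, M i k := by
  simp only [mul_apply, Matrix.sub_apply, Matrix.smul_apply, vecMulVec_apply, one_apply, smul_eq_mul,
    mul_one, mul_sub, mul_ite, mul_zero, mul_one, Finset.sum_sub_distrib,
    Finset.sum_ite_eq', Finset.mem_univ, if_true, Finset.mul_sum]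
  congr 1
  apply Finset.sum_congr rfl
  intro k _
  ring

lemma VMV_apply {n : ℕ} (M : Matrix (Fin n) (Fin n) ℝ) (i j : Fin n) :
    ((1 - (1 / (n : ℝ)) • vecMulVec (fun _ => (1:ℝ)) (fun _ => 1)) * M
      * (1 - (1 / (n : ℝ)) • vecMulVec (fun _ => (1:ℝ)) (fun _ => 1))
      : Matrix (Fin n) (Fin n) ℝ) i j
      = M i j - (1 / (n:ℝ)) * (∑ l, M l j) - (1 / (n:ℝ)) * (∑ k, M i k)
        + (1 / (n:ℝ)) * ((1 / (n:ℝ)) * ∑ k, ∑ l, M l k) := by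
  rw [mulV_apply, Vmul_apply]
  have h1 : ∀ k, (((1 - (1 / (n : ℝ)) • vecMulVec (fun _ => (1:ℝ)) (fun _ => 1)) * M
      : Matrix (Fin n) (Fin n) ℝ)) i k
      = M i k - (1 / (n:ℝ)) * ∑ l, M l k := fun k => Vmul_apply M i k
  rw [Finset.sum_congr rfl (fun k _ => h1 k), Finset.sum_sub_distrib, ← Finset.mul_sum]
  ring

end Aux

/-- (Schoenberg) Let `n ≥ 1`, `r ≥ 1`, `D ∈ 𝕊ⁿ` symmetric, and `V = Iₙ − (1/n)·𝟏𝟏ᵀ`. Then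
there exist points `x₁, …, xₙ ∈ ℝ^r` with `D_{ij} = ‖xᵢ − xⱼ‖²` for all `i, j` iff
(i) `D_{ii} = 0` for all `i`; (ii) `−V D V` is positive semidefinite; and
(iii) `rank(V D V) ≤ r`. -/
theorem schoenberg_edm_characterization (n r : ℕ) (hn : 1 ≤ n) (hr : 1 ≤ r)
    (D : Matrix (Fin n) (Fin n) ℝ) (hD : D.IsSymm)
    (V : Matrix (Fin n) (Fin n) ℝ)
    (hV : V = 1 - (1 / (n : ℝ)) • vecMulVec (fun _ => 1) (fun _ => 1)) :
    (∃ x : Fin n → EuclideanSpace ℝ (Fin r), ∀ i j, D i j = ‖x i - x j‖ ^ 2) ↔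
      ((∀ i, D i i = 0) ∧ (-(V * D * V)).PosSemidef ∧ (V * D * V).rank ≤ r) := by
  have hn0 : (n:ℝ) ≠ 0 := Nat.cast_ne_zero.mpr (by omega)
  have hVsym : Vᵀ = V := by
    rw [hV]
    ext i j
    simp only [transpose_apply, Matrix.sub_apply, one_apply, Matrix.smul_apply, vecMulVec_apply,
      smul_eq_mul, mul_one]
    by_cases h : i = j
    · subst h; rfl
    · rw [if_neg h, if_neg (fun hh => h hh.symm)]
  have hcolsum : ∀ j, (∑ k, V k j) = 0 := by
    intro j
    simp only [hV, Matrix.sub_apply, one_apply, Matrix.smul_apply, vecMulVec_apply, smul_eq_mul, mul_one,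
      Finset.sum_sub_distrib, Finset.sum_ite_eq, Finset.sum_ite_eq', Finset.mem_univ, if_true, Finset.sum_const,
      Finset.card_univ, Fintype.card_fin, nsmul_eq_mul]
    field_simp
    norm_num
  have hrowsum : ∀ i, (∑ k, V i k) = 0 := by
    intro i
    simp only [hV, Matrix.sub_apply, one_apply, Matrix.smul_apply, vecMulVec_apply, smul_eq_mul, mul_one,
      Finset.sum_sub_distrib, Finset.sum_ite_eq', Finset.sum_ite_eq, Finset.mem_univ, if_true, Finset.sum_const,
      Finset.card_univ, Fintype.card_fin, nsmul_eq_mul]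
    field_simp
    norm_num
  have hVMV : ∀ (M : Matrix (Fin n) (Fin n) ℝ) (i j : Fin n),
      (V * M * V) i j = M i j - (1 / (n:ℝ)) * (∑ l, M l j) - (1 / (n:ℝ)) * (∑ k, M i k)
        + (1 / (n:ℝ)) * ((1 / (n:ℝ)) * ∑ k, ∑ l, M l k) := by
    intro M i j
    rw [hV]
    exact VMV_apply M i j
  constructor
  · rintro ⟨x, hx⟩
    set X : Matrix (Fin r) (Fin n) ℝ := Matrix.of (fun k i => x i k) with hXdef
    set G : Matrix (Fin n) (Fin n) ℝ := Xᵀ * X with hGdef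
    have hinner : ∀ i j, (inner ℝ (x i) (x j) : ℝ) = G i j := by
      intro i j
      simp only [hGdef, mul_apply, transpose_apply, hXdef, of_apply, PiLp.inner_apply,
        RCLike.inner_apply, conj_trivial]
      exact Finset.sum_congr rfl (fun _ _ => mul_comm _ _)
    have hDG : ∀ i j, D i j = G i i + G j j - 2 * G i j := by
      intro i j
      rw [hx i j, norm_sub_sq_real, ← real_inner_self_eq_norm_sq, ← real_inner_self_eq_norm_sq,
        hinner, hinner, hinner]
      ring
    set A : Matrix (Fin n) (Fin n) ℝ := vecMulVec (fun i => G i i) (fun _ => 1) with hAdef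
    have hDdec : D = A + Aᵀ - (G + G) := by
      ext i j
      simp only [Matrix.sub_apply, Matrix.add_apply, hAdef, vecMulVec_apply, transpose_apply, mul_one]
      rw [hDG i j]; ring
    have hAV : A * V = 0 := by
      ext i j
      simp only [mul_apply, hAdef, vecMulVec_apply, mul_one, Matrix.zero_apply]
      rw [← Finset.mul_sum, hcolsum j, mul_zero]
    have hVA : V * Aᵀ = 0 := by
      ext i j
      simp only [mul_apply, hAdef, transpose_apply, vecMulVec_apply, mul_one, Matrix.zero_apply]
      rw [← Finset.sum_mul, hrowsum i, zero_mul]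
    have hexpand : V * (A + Aᵀ - (G + G)) * V
        = V * (A * V) + (V * Aᵀ) * V - (V * G * V + V * G * V) := by noncomm_ring
    have hVDV : V * D * V = -(V * G * V + V * G * V) := by
      rw [hDdec, hexpand, hAV, hVA, Matrix.mul_zero, Matrix.zero_mul, zero_add, zero_sub]
    set W : Matrix (Fin r) (Fin n) ℝ := X * V with hWdef
    have hVGV : V * G * V = Wᵀ * W := by
      rw [hGdef, hWdef, transpose_mul, hVsym, Matrix.mul_assoc V (Xᵀ * X) V, Matrix.mul_assoc Xᵀ X V,
        ← Matrix.mul_assoc V Xᵀ (X * V)]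
    refine ⟨fun i => by rw [hx i i]; simp, ?_, ?_⟩
    · rw [hVDV, neg_neg, hVGV]
      have hpsd : (Wᵀ * W).PosSemidef := by
        rw [← conjTranspose_eq_transpose_of_trivial]
        exact posSemidef_conjTranspose_mul_self W
      exact hpsd.add hpsd
    · have : V * D * V = (((-2:ℝ)) • Wᵀ) * W := by
        rw [hVDV, hVGV, Matrix.smul_mul, ← two_smul ℝ (Wᵀ * W), ← neg_smul]
      rw [this]
      exact le_trans (rank_mul_le_right _ _)
        (le_trans (rank_le_card_height W) (by simp))
  · rintro ⟨h0, hpsd, hrk⟩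
    set B : Matrix (Fin n) (Fin n) ℝ := (-(1/2:ℝ)) • (V * D * V) with hBdef
    have hBpsd : B.PosSemidef := by
      have : B = ((1/2:ℝ)) • (-(V * D * V)) := by
        rw [hBdef, smul_neg, ← neg_smul]
      rw [this]
      exact psd_smul_nonneg hpsd (by norm_num)
    have hBrk : B.rank ≤ r := by
      have : B = (((-(1/2:ℝ))) • (1 : Matrix (Fin n) (Fin n) ℝ)) * (V * D * V) := by
        rw [smul_mul_assoc, Matrix.one_mul]
      rw [this]
      exact le_trans (rank_mul_le_right _ _) hrk
    obtain ⟨X, hX⟩ := psd_factor B hBpsd hBrk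
    set y : Fin n → EuclideanSpace ℝ (Fin r) :=
      fun i => (WithLp.equiv 2 (Fin r → ℝ)).symm (fun k => X k i) with hydef
    refine ⟨y, ?_⟩
    intro i j
    have hinner : ∀ a b : Fin n, (inner ℝ (y a) (y b) : ℝ) = B a b := by
      intro a b
      rw [hX]
      simp only [hydef, mul_apply, transpose_apply, PiLp.inner_apply, RCLike.inner_apply,
        conj_trivial, WithLp.equiv_symm_apply, PiLp.toLp_apply]
      exact Finset.sum_congr rfl (fun _ _ => mul_comm _ _)
    rw [norm_sub_sq_real, ← real_inner_self_eq_norm_sq, ← real_inner_self_eq_norm_sq,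
      hinner, hinner, hinner]
    have hBapply : ∀ a b, B a b = (-(1/2:ℝ)) * ((V * D * V) a b) := by
      intro a b
      rw [hBdef, Matrix.smul_apply, smul_eq_mul]
    have hsymsum : ∀ a, (∑ l, D l a) = ∑ l, D a l :=
      fun a => Finset.sum_congr rfl (fun l _ => hD.apply a l)
    rw [hBapply, hBapply, hBapply, hVMV, hVMV, hVMV, hsymsum i, hsymsum j, h0 i, h0 j]
    ring
end
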